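/- Let C be a k-clustering of (X, s) in which every cluster has at least two points. If C is not separation-uniform, then there exist a weight function w on X and a k-clustering C' of X with rcut(C', w[X], s) < rcut(C, w[X], s); in particular, C does not minimize the ratio-cut objective for the weight function w. -/

import Mathlib

open Finset

/-- A weight function assigns a positive real weight to every point. -/
def IsWeight {X : Type*} (w : X → ℝ) : Prop := ∀ x, 0 < w x

/-- A k-clustering: a partition of `X` into `k` pairwise disjoint nonempty parts. -/
def IsClustering {X : Type*} [Fintype X] [DecidableEq X]
    (C : Finset (Finset X)) (k : ℕ) : Prop :=
  C.card = k ∧ (∀ A ∈ C, A.Nonempty) ∧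
  (∀ A ∈ C, ∀ B ∈ C, A ≠ B → Disjoint A B) ∧
  (∀ x : X, ∃ A ∈ C, x ∈ A)

/-- `x ∼_C y`: `x` and `y` lie in the same cluster of `C`. -/
def SameCluster {X : Type*} [DecidableEq X] (C : Finset (Finset X)) (x y : X) : Prop :=
  ∃ A ∈ C, x ∈ A ∧ y ∈ A

/-- The ratio-cut cost of a clustering `C` of weighted data `(w[X], s)`. -/
noncomputable def rcut {X : Type*} [Fintype X] [DecidableEq X]
    (C : Finset (Finset X)) (w : X → ℝ) (s : X → X → ℝ) : ℝ :=
  (1 / 2) * ∑ A ∈ C, (∑ x ∈ A, ∑ y ∈ Aᶜ, s x y * w x * w y) / (∑ x ∈ A, w x)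

/-- `C` is perfect: within-cluster similarities all exceed between-cluster similarities. -/
def IsPerfect {X : Type*} [DecidableEq X] (C : Finset (Finset X)) (s : X → X → ℝ) : Prop :=
  ∀ x₁ x₂ x₃ x₄ : X, SameCluster C x₁ x₂ → ¬ SameCluster C x₃ x₄ → s x₃ x₄ < s x₁ x₂

/-- `C` is separation-uniform: all between-cluster similarities are equal. -/
def IsSeparationUniform {X : Type*} [DecidableEq X]
    (C : Finset (Finset X)) (s : X → X → ℝ) : Prop :=
  ∃ lam : ℝ, ∀ x y : X, ¬ SameCluster C x y → s x y = lam

section RcutAux5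
set_option linter.unusedSectionVars false

variable {X : Type*} [Fintype X] [DecidableEq X]

private lemma cluster_eq_of_mem {C : Finset (Finset X)} {k : ℕ} (hC : IsClustering C k)
    {A B : Finset X} (hA : A ∈ C) (hB : B ∈ C) {x : X} (hxA : x ∈ A) (hxB : x ∈ B) :
    A = B := by
  by_contra h
  exact Finset.disjoint_left.mp (hC.2.2.1 A hA B hB h) hxA hxB

private lemma same_symm {C : Finset (Finset X)} {x y : X} (h : SameCluster C x y) :
    SameCluster C y x :=
  let ⟨A, hA, h1, h2⟩ := h; ⟨A, hA, h2, h1⟩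

/-- The key quantity: average similarity from `p` into a cluster not containing `p`. -/
private noncomputable def Fav (s : X → X → ℝ) (p : X) (A : Finset X) : ℝ :=
  if p ∈ A then 0 else (∑ x ∈ A, s p x) / A.card

/-- Move the point `q` from cluster `S` to cluster `T`. -/
private def move (C : Finset (Finset X)) (S T : Finset X) (q : X) : Finset (Finset X) :=
  insert (S.erase q) (insert (insert q T) ((C.erase S).erase T))

section Move
variable {C : Finset (Finset X)} {k : ℕ} {S T : Finset X} {q : X}
variable (hC : IsClustering C k) (hS : S ∈ C) (hT : T ∈ C) (hST : S ≠ T)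
  (hqS : q ∈ S) (h2 : 2 ≤ S.card)

include hC hS hT hST hqS

private lemma q_not_mem_T : q ∉ T :=
  fun h => Finset.disjoint_left.mp (hC.2.2.1 S hS T hT hST) hqS h

include h2 in
private lemma erase_nonempty' : (S.erase q).Nonempty := by
  rw [← Finset.card_pos, Finset.card_erase_of_mem hqS]; omega

private lemma ne_new : S.erase q ≠ insert q T := by
  intro h
  have : q ∈ S.erase q := h ▸ Finset.mem_insert_self q T
  simp at this

include h2 in
private lemma not_mem_rest₁ : S.erase q ∉ (C.erase S).erase T := by
  intro h
  have hD : S.erase q ∈ C := Finset.mem_of_mem_erase (Finset.mem_of_mem_erase h)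
  have hne : S.erase q ≠ S := Finset.ne_of_mem_erase (Finset.mem_of_mem_erase h)
  obtain ⟨x, hx⟩ := erase_nonempty' hC hS hT hST hqS h2
  exact Finset.disjoint_left.mp (hC.2.2.1 _ hD S hS hne) hx (Finset.mem_of_mem_erase hx)

private lemma not_mem_rest₂ : insert q T ∉ (C.erase S).erase T := by
  intro h
  have hD : insert q T ∈ C := Finset.mem_of_mem_erase (Finset.mem_of_mem_erase h)
  have hne : insert q T ≠ S := Finset.ne_of_mem_erase (Finset.mem_of_mem_erase h)
  exact Finset.disjoint_left.mp (hC.2.2.1 _ hD S hS hne) (Finset.mem_insert_self q T) hqS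

include h2 in
private lemma move_card : (move C S T q).card = C.card := by
  have hTm : T ∈ C.erase S := Finset.mem_erase.mpr ⟨Ne.symm hST, hT⟩
  have h2C : 2 ≤ C.card := by
    have : ({S, T} : Finset (Finset X)) ⊆ C := by
      intro A hA; rcases Finset.mem_insert.mp hA with rfl | hA
      · exact hS
      · exact (Finset.mem_singleton.mp hA) ▸ hT
    calc 2 = ({S, T} : Finset (Finset X)).card := (Finset.card_pair hST).symm
      _ ≤ C.card := Finset.card_le_card this
  rw [move, Finset.card_insert_of_notMem, Finset.card_insert_of_notMem,
    Finset.card_erase_of_mem hTm, Finset.card_erase_of_mem hS]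
  · omega
  · exact not_mem_rest₂ hC hS hT hST hqS
  · intro h
    rcases Finset.mem_insert.mp h with h | h
    · exact ne_new hC hS hT hST hqS h
    · exact not_mem_rest₁ hC hS hT hST hqS h2 h

include h2 in
private lemma sum_move (g : Finset X → ℝ) :
    ∑ A ∈ move C S T q, g A
      = g (S.erase q) + g (insert q T) + ∑ A ∈ (C.erase S).erase T, g A := by
  rw [move, Finset.sum_insert, Finset.sum_insert (not_mem_rest₂ hC hS hT hST hqS), add_assoc]
  intro h
  rcases Finset.mem_insert.mp h with h | h
  · exact ne_new hC hS hT hST hqS h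
  · exact not_mem_rest₁ hC hS hT hST hqS h2 h

private lemma sum_orig (g : Finset X → ℝ) :
    ∑ A ∈ C, g A = g S + g T + ∑ A ∈ (C.erase S).erase T, g A := by
  have hTm : T ∈ C.erase S := Finset.mem_erase.mpr ⟨Ne.symm hST, hT⟩
  rw [← Finset.add_sum_erase _ g hS, ← Finset.add_sum_erase _ g hTm, add_assoc]

include h2 in
private lemma move_clustering : IsClustering (move C S T q) C.card := by
  have hqT : q ∉ T := q_not_mem_T hC hS hT hST hqS
  have hdisjST : Disjoint S T := hC.2.2.1 S hS T hT hST
  refine ⟨move_card hC hS hT hST hqS h2, ?_, ?_, ?_⟩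
  · intro A hA
    rcases Finset.mem_insert.mp hA with rfl | hA
    · exact erase_nonempty' hC hS hT hST hqS h2
    rcases Finset.mem_insert.mp hA with rfl | hA
    · exact Finset.insert_nonempty _ _
    · exact hC.2.1 A (Finset.mem_of_mem_erase (Finset.mem_of_mem_erase hA))
  · -- pairwise disjoint
    have hmem : ∀ {D : Finset X}, D ∈ move C S T q →
        D = S.erase q ∨ D = insert q T ∨ D ∈ (C.erase S).erase T := by
      intro D hD
      rcases Finset.mem_insert.mp hD with h | h
      · exact Or.inl h
      rcases Finset.mem_insert.mp h with h | h
      · exact Or.inr (Or.inl h)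
      · exact Or.inr (Or.inr h)
    have d1 : Disjoint (S.erase q) (insert q T) := by
      rw [Finset.disjoint_insert_right]
      exact ⟨Finset.notMem_erase q S,
        Finset.disjoint_of_subset_left (Finset.erase_subset q S) hdisjST⟩
    have d2 : ∀ D ∈ (C.erase S).erase T, Disjoint (S.erase q) D := by
      intro D hD
      have hDC : D ∈ C := Finset.mem_of_mem_erase (Finset.mem_of_mem_erase hD)
      have hDS : D ≠ S := Finset.ne_of_mem_erase (Finset.mem_of_mem_erase hD)
      exact Finset.disjoint_of_subset_left (Finset.erase_subset q S)
        (hC.2.2.1 S hS D hDC (Ne.symm hDS))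
    have d3 : ∀ D ∈ (C.erase S).erase T, Disjoint (insert q T) D := by
      intro D hD
      have hDC : D ∈ C := Finset.mem_of_mem_erase (Finset.mem_of_mem_erase hD)
      have hDS : D ≠ S := Finset.ne_of_mem_erase (Finset.mem_of_mem_erase hD)
      have hDT : D ≠ T := Finset.ne_of_mem_erase hD
      refine Finset.disjoint_insert_left.mpr ⟨?_, ?_⟩
      · exact fun h => Finset.disjoint_left.mp (hC.2.2.1 S hS D hDC (Ne.symm hDS)) hqS h
      · exact hC.2.2.1 T hT D hDC (Ne.symm hDT)
    intro A hA B hB hAB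
    rcases hmem hA with rfl | rfl | hA' <;> rcases hmem hB with rfl | rfl | hB'
    · exact absurd rfl hAB
    · exact d1
    · exact d2 _ hB'
    · exact d1.symm
    · exact absurd rfl hAB
    · exact d3 _ hB'
    · exact (d2 _ hA').symm
    · exact (d3 _ hA').symm
    · have hAC : A ∈ C := Finset.mem_of_mem_erase (Finset.mem_of_mem_erase hA')
      have hBC : B ∈ C := Finset.mem_of_mem_erase (Finset.mem_of_mem_erase hB')
      exact hC.2.2.1 A hAC B hBC hAB
  · -- cover
    intro x
    obtain ⟨A, hA, hxA⟩ := hC.2.2.2 x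
    by_cases hAS : A = S
    · by_cases hxq : x = q
      · exact ⟨insert q T, Finset.mem_insert_of_mem (Finset.mem_insert_self _ _),
          hxq ▸ Finset.mem_insert_self q T⟩
      · exact ⟨S.erase q, Finset.mem_insert_self _ _, Finset.mem_erase.mpr ⟨hxq, hAS ▸ hxA⟩⟩
    by_cases hAT : A = T
    · exact ⟨insert q T, Finset.mem_insert_of_mem (Finset.mem_insert_self _ _),
        Finset.mem_insert_of_mem (hAT ▸ hxA)⟩
    · exact ⟨A, Finset.mem_insert_of_mem (Finset.mem_insert_of_mem
        (Finset.mem_erase.mpr ⟨hAT, Finset.mem_erase.mpr ⟨hAS, hA⟩⟩)), hxA⟩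

end Move

section Bounds
variable {s : X → X → ℝ} {p : X} {M : ℝ}
  (hsym : ∀ x y, s x y = s y x) (hnn : ∀ x y, 0 ≤ s x y) (hM : 1 ≤ M)

include hsym hnn hM

private lemma rcut_lower {C : Finset (Finset X)} {k : ℕ} (hC : IsClustering C k) :
    M / 2 * ∑ A ∈ C, Fav s p A ≤ rcut C (fun x => if x = p then M else 1) s := by
  set w : X → ℝ := fun x => if x = p then M else 1 with hw
  have hwpos : ∀ x, 0 < w x := by
    intro x; simp only [hw]; split
    · linarith
    · norm_num
  have hwnn : ∀ x, 0 ≤ w x := fun x => (hwpos x).le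
  have e1 : M / 2 * ∑ A ∈ C, Fav s p A = 1 / 2 * ∑ A ∈ C, M * Fav s p A := by
    rw [Finset.mul_sum]; rw [Finset.mul_sum]
    apply Finset.sum_congr rfl; intro A _; ring
  rw [e1, rcut]
  apply mul_le_mul_of_nonneg_left _ (by norm_num : (0:ℝ) ≤ 1/2)
  apply Finset.sum_le_sum
  intro A hA
  have hAne := hC.2.1 A hA
  have hwApos : 0 < ∑ x ∈ A, w x := Finset.sum_pos (fun x _ => hwpos x) hAne
  by_cases hpA : p ∈ A
  · rw [Fav, if_pos hpA, mul_zero]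
    apply div_nonneg _ hwApos.le
    apply Finset.sum_nonneg; intro x _
    apply Finset.sum_nonneg; intro y _
    exact mul_nonneg (mul_nonneg (hnn x y) (hwnn x)) (hwnn y)
  · rw [Fav, if_neg hpA]
    have hcard : (0:ℝ) < A.card := by exact_mod_cast Finset.card_pos.mpr hAne
    have hwA : ∑ x ∈ A, w x = A.card := by
      rw [Finset.sum_congr rfl (fun x hx => if_neg (fun h : x = p => hpA (h ▸ hx)))]
      simp
    rw [hwA, ← mul_div_assoc]
    apply div_le_div_of_nonneg_right ?_ hcard.le
    rw [Finset.mul_sum]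
    apply Finset.sum_le_sum
    intro x hx
    have hxp : x ≠ p := fun h => hpA (h ▸ hx)
    have hpAc : p ∈ Aᶜ := Finset.mem_compl.mpr hpA
    have hwx : w x = 1 := by simp only [hw]; rw [if_neg hxp]
    have hwp : w p = M := by simp only [hw]; simp
    calc M * s p x = s x p * w x * w p := by rw [hwx, hwp, hsym x p]; ring
      _ ≤ ∑ y ∈ Aᶜ, s x y * w x * w y :=
        Finset.single_le_sum
          (fun y _ => mul_nonneg (mul_nonneg (hnn x y) (hwnn x)) (hwnn y)) hpAc

private lemma rcut_upper {C' : Finset (Finset X)} {k : ℕ} (hC' : IsClustering C' k) :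
    rcut C' (fun x => if x = p then M else 1) s
      ≤ M / 2 * (∑ A ∈ C', Fav s p A) + (C'.card : ℝ) / 2 * (∑ x : X, ∑ y : X, s x y) := by
  set w : X → ℝ := fun x => if x = p then M else 1 with hw
  set E : ℝ := ∑ x : X, ∑ y : X, s x y with hE
  have hMpos : (0:ℝ) < M := lt_of_lt_of_le one_pos hM
  have hwpos : ∀ x, 0 < w x := by
    intro x; simp only [hw]; split
    · linarith
    · norm_num
  have hwnn : ∀ x, 0 ≤ w x := fun x => (hwpos x).le
  have hwp : w p = M := by simp only [hw]; simp
  have hwle : ∀ x, w x ≤ M := by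
    intro x; simp only [hw]; split
    · exact le_rfl
    · exact hM
  have hEnn : 0 ≤ E := by
    apply Finset.sum_nonneg; intro x _; exact Finset.sum_nonneg (fun y _ => hnn x y)
  have hrow : ∀ x : X, ∀ B : Finset X, ∑ y ∈ B, s x y ≤ ∑ y : X, s x y := by
    intro x B
    exact Finset.sum_le_sum_of_subset_of_nonneg (Finset.subset_univ B) (fun y _ _ => hnn x y)
  have hblock : ∀ A : Finset X, ∑ x ∈ A, ∑ y : X, s x y ≤ E := by
    intro A
    rw [hE]
    exact Finset.sum_le_sum_of_subset_of_nonneg (Finset.subset_univ A)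
      (fun x _ _ => Finset.sum_nonneg (fun y _ => hnn x y))
  have e1 : M / 2 * (∑ A ∈ C', Fav s p A) + (C'.card : ℝ) / 2 * E
      = 1 / 2 * ∑ A ∈ C', (M * Fav s p A + E) := by
    rw [Finset.sum_add_distrib, Finset.sum_const, nsmul_eq_mul, ← Finset.mul_sum]
    ring
  rw [rcut, e1]
  apply mul_le_mul_of_nonneg_left _ (by norm_num : (0:ℝ) ≤ 1/2)
  apply Finset.sum_le_sum
  intro A hA
  have hAne := hC'.2.1 A hA
  have hcut_nn : 0 ≤ ∑ x ∈ A, ∑ y ∈ Aᶜ, s x y * w x * w y := by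
    apply Finset.sum_nonneg; intro x _
    exact Finset.sum_nonneg (fun y _ => mul_nonneg (mul_nonneg (hnn x y) (hwnn x)) (hwnn y))
  by_cases hpA : p ∈ A
  · rw [Fav, if_pos hpA, mul_zero, zero_add]
    have h1 : ∑ x ∈ A, ∑ y ∈ Aᶜ, s x y * w x * w y ≤ M * E := by
      have step : ∀ x ∈ A, ∑ y ∈ Aᶜ, s x y * w x * w y ≤ M * ∑ y : X, s x y := by
        intro x hx
        have : ∑ y ∈ Aᶜ, s x y * w x * w y ≤ ∑ y ∈ Aᶜ, M * s x y := by
          apply Finset.sum_le_sum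
          intro y hy
          have hyx : w x * w y ≤ M := by
            by_cases hxp : x = p
            · have hyp : y ≠ p := fun h => (Finset.mem_compl.mp hy) (h ▸ hxp ▸ hpA)
              have : w y = 1 := by simp only [hw]; rw [if_neg hyp]
              rw [this, hxp, hwp, mul_one]
            · have : w x = 1 := by simp only [hw]; rw [if_neg hxp]
              rw [this, one_mul]; exact hwle y
          calc s x y * w x * w y = s x y * (w x * w y) := by ring
            _ ≤ s x y * M := mul_le_mul_of_nonneg_left hyx (hnn x y)
            _ = M * s x y := by ring
        calc ∑ y ∈ Aᶜ, s x y * w x * w y ≤ ∑ y ∈ Aᶜ, M * s x y := this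
          _ = M * ∑ y ∈ Aᶜ, s x y := by rw [Finset.mul_sum]
          _ ≤ M * ∑ y : X, s x y := mul_le_mul_of_nonneg_left (hrow x Aᶜ) hMpos.le
      calc ∑ x ∈ A, ∑ y ∈ Aᶜ, s x y * w x * w y ≤ ∑ x ∈ A, M * ∑ y : X, s x y :=
            Finset.sum_le_sum step
        _ = M * ∑ x ∈ A, ∑ y : X, s x y := by rw [Finset.mul_sum]
        _ ≤ M * E := mul_le_mul_of_nonneg_left (hblock A) hMpos.le
    have h2 : M ≤ ∑ x ∈ A, w x := by
      calc M = w p := hwp.symm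
        _ ≤ ∑ x ∈ A, w x := Finset.single_le_sum (fun x _ => hwnn x) hpA
    calc (∑ x ∈ A, ∑ y ∈ Aᶜ, s x y * w x * w y) / (∑ x ∈ A, w x)
        ≤ (M * E) / M := div_le_div₀ (mul_nonneg hMpos.le hEnn) h1 hMpos h2
      _ = E := by field_simp
  · rw [Fav, if_neg hpA]
    have hcard : (0:ℝ) < A.card := by exact_mod_cast Finset.card_pos.mpr hAne
    have hcard1 : (1:ℝ) ≤ A.card := by
      exact_mod_cast Nat.one_le_iff_ne_zero.mpr (Finset.card_ne_zero_of_mem hAne.choose_spec)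
    have hpAc : p ∈ Aᶜ := Finset.mem_compl.mpr hpA
    have hwA : ∑ x ∈ A, w x = A.card := by
      rw [Finset.sum_congr rfl (fun x hx => if_neg (fun h : x = p => hpA (h ▸ hx)))]
      simp
    have h1 : ∑ x ∈ A, ∑ y ∈ Aᶜ, s x y * w x * w y
        ≤ M * (∑ x ∈ A, s p x) + E := by
      have step : ∀ x ∈ A, ∑ y ∈ Aᶜ, s x y * w x * w y ≤ M * s p x + ∑ y : X, s x y := by
        intro x hx
        have hxp : x ≠ p := fun h => hpA (h ▸ hx)
        have hwx : w x = 1 := by simp only [hw]; rw [if_neg hxp]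
        rw [← Finset.add_sum_erase _ _ hpAc]
        apply add_le_add
        · exact le_of_eq (by rw [hwx, hwp, hsym x p]; ring)
        · have : ∀ y ∈ Aᶜ.erase p, s x y * w x * w y = s x y := by
            intro y hy
            have hyp : y ≠ p := Finset.ne_of_mem_erase hy
            have hwy : w y = 1 := by simp only [hw]; rw [if_neg hyp]
            rw [hwx, hwy, mul_one, mul_one]
          rw [Finset.sum_congr rfl this]
          exact Finset.sum_le_sum_of_subset_of_nonneg
            (Finset.subset_univ _) (fun y _ _ => hnn x y)
      calc ∑ x ∈ A, ∑ y ∈ Aᶜ, s x y * w x * w y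
          ≤ ∑ x ∈ A, (M * s p x + ∑ y : X, s x y) := Finset.sum_le_sum step
        _ = M * (∑ x ∈ A, s p x) + ∑ x ∈ A, ∑ y : X, s x y := by
            rw [Finset.sum_add_distrib, Finset.mul_sum]
        _ ≤ M * (∑ x ∈ A, s p x) + E := by
            exact add_le_add_right (hblock A) _
    calc (∑ x ∈ A, ∑ y ∈ Aᶜ, s x y * w x * w y) / (∑ x ∈ A, w x)
        ≤ (M * (∑ x ∈ A, s p x) + E) / A.card := by
          rw [hwA]; exact div_le_div_of_nonneg_right h1 hcard.le
      _ = M * (∑ x ∈ A, s p x) / A.card + E / A.card := add_div _ _ _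
      _ ≤ M * ((∑ x ∈ A, s p x) / A.card) + E := by
          rw [← mul_div_assoc]
          exact add_le_add_right (div_le_self hEnn hcard1) _

end Bounds

section FMoves
variable {s : X → X → ℝ} {p : X} {S T : Finset X} {q : X}

private lemma F_moveA (hpT : p ∈ T) (hpS : p ∉ S) (hqS : q ∈ S) (h2 : 2 ≤ S.card)
    (hmax : ∀ x ∈ S, s p x ≤ s p q) {u : X} (hu : u ∈ S) (hlt : s p u < s p q) :
    Fav s p (S.erase q) + Fav s p (insert q T) < Fav s p S + Fav s p T := by
  have hpT' : p ∈ insert q T := Finset.mem_insert_of_mem hpT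
  have hpSe : p ∉ S.erase q := fun h => hpS (Finset.mem_of_mem_erase h)
  rw [Fav, Fav, Fav, Fav, if_pos hpT, if_pos hpT', if_neg hpS, if_neg hpSe, add_zero, add_zero]
  have huq : u ≠ q := fun h => absurd hlt (by rw [h]; exact lt_irrefl _)
  have hu' : u ∈ S.erase q := Finset.mem_erase.mpr ⟨huq, hu⟩
  have hkey : ∑ x ∈ S.erase q, s p x < ((S.erase q).card : ℝ) * s p q := by
    calc ∑ x ∈ S.erase q, s p x < ∑ _x ∈ S.erase q, s p q :=
          Finset.sum_lt_sum (fun i hi => hmax i (Finset.mem_of_mem_erase hi)) ⟨u, hu', hlt⟩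
      _ = ((S.erase q).card : ℝ) * s p q := by rw [Finset.sum_const, nsmul_eq_mul]
  have hcards : S.card = (S.erase q).card + 1 := by
    rw [Finset.card_erase_of_mem hqS]; omega
  have hmpos : (0:ℝ) < ((S.erase q).card : ℝ) := by
    have h1 : 1 ≤ (S.erase q).card := by rw [Finset.card_erase_of_mem hqS]; omega
    exact_mod_cast Nat.lt_of_lt_of_le Nat.zero_lt_one h1
  have hSsum : ∑ x ∈ S, s p x = s p q + ∑ x ∈ S.erase q, s p x :=
    (Finset.add_sum_erase S _ hqS).symm
  have hc2 : (S.card : ℝ) = ((S.erase q).card : ℝ) + 1 := by exact_mod_cast hcards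
  rw [hSsum, div_lt_div_iff₀ hmpos (by rw [hc2]; linarith), hc2]
  nlinarith [hkey]

private lemma F_moveB (hpS : p ∉ S) (hpT : p ∉ T) (hqS : q ∈ S) (hqT : q ∉ T) (h2 : 2 ≤ S.card)
    (hTne : T.Nonempty) (hconst : ∀ x ∈ S, s p x = s p q)
    (hlt : s p q * T.card < ∑ x ∈ T, s p x) :
    Fav s p (S.erase q) + Fav s p (insert q T) < Fav s p S + Fav s p T := by
  have hpq : p ≠ q := fun h => hpS (h ▸ hqS)
  have hpSe : p ∉ S.erase q := fun h => hpS (Finset.mem_of_mem_erase h)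
  have hpiT : p ∉ insert q T := by
    rw [Finset.mem_insert]; rintro (h | h); exacts [hpq h, hpT h]
  rw [Fav, Fav, Fav, Fav, if_neg hpS, if_neg hpT, if_neg hpSe, if_neg hpiT]
  have hmpos' : 1 ≤ (S.erase q).card := by rw [Finset.card_erase_of_mem hqS]; omega
  have hmpos : (0:ℝ) < ((S.erase q).card : ℝ) := by exact_mod_cast hmpos'
  have hSpos : (0:ℝ) < (S.card : ℝ) := by
    have : 0 < S.card := by omega
    exact_mod_cast this
  have htpos : (0:ℝ) < (T.card : ℝ) := by exact_mod_cast Finset.card_pos.mpr hTne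
  have hFe : (∑ x ∈ S.erase q, s p x) / ((S.erase q).card : ℝ) = s p q := by
    rw [Finset.sum_congr rfl (fun x hx => hconst x (Finset.mem_of_mem_erase hx)),
      Finset.sum_const, nsmul_eq_mul]
    exact mul_div_cancel_left₀ _ (ne_of_gt hmpos)
  have hFS : (∑ x ∈ S, s p x) / (S.card : ℝ) = s p q := by
    rw [Finset.sum_congr rfl hconst, Finset.sum_const, nsmul_eq_mul]
    exact mul_div_cancel_left₀ _ (ne_of_gt hSpos)
  rw [hFe, hFS, Finset.sum_insert hqT, Finset.card_insert_of_notMem hqT]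
  apply add_lt_add_right
  have hcast : ((T.card + 1 : ℕ) : ℝ) = (T.card : ℝ) + 1 := by push_cast; ring
  rw [hcast, div_lt_div_iff₀ (by linarith) htpos]
  nlinarith [hlt]

end FMoves

private lemma exists_good_move {s : X → X → ℝ} {C : Finset (Finset X)} {k : ℕ}
    (hC : IsClustering C k) (hk1 : 1 < k) (hk2 : k < Fintype.card X)
    (hbig : ∀ A ∈ C, 2 ≤ A.card)
    (hsym : ∀ x y, s x y = s y x)
    (hnsep : ¬ IsSeparationUniform C s) :
    ∃ (p : X) (S T : Finset X) (q : X), S ∈ C ∧ T ∈ C ∧ S ≠ T ∧ q ∈ S ∧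
      Fav s p (S.erase q) + Fav s p (insert q T) < Fav s p S + Fav s p T := by
  have key : ∃ p y z : X, ¬SameCluster C p y ∧ ¬SameCluster C p z ∧ s p y ≠ s p z := by
    by_contra hcon
    push_neg at hcon
    apply hnsep
    have hpos : 0 < Fintype.card X := by omega
    obtain ⟨p₀⟩ := Fintype.card_pos_iff.mp hpos
    obtain ⟨P₀, hP₀, hp₀⟩ := hC.2.2.2 p₀
    have hcard : 1 < C.card := by rw [hC.1]; exact hk1
    obtain ⟨B, hB, hBP⟩ := Finset.exists_mem_ne hcard P₀
    obtain ⟨b₀, hb₀⟩ := hC.2.1 B hB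
    have hpb : ¬ SameCluster C p₀ b₀ := by
      rintro ⟨D, hD, h1, h2⟩
      have e1 : D = P₀ := cluster_eq_of_mem hC hD hP₀ h1 hp₀
      have e2 : D = B := cluster_eq_of_mem hC hD hB h2 hb₀
      exact hBP (e2 ▸ e1)
    refine ⟨s p₀ b₀, fun x y hxy => ?_⟩
    by_cases hx : SameCluster C p₀ x
    · have hy : ¬ SameCluster C p₀ y := by
        intro hy
        obtain ⟨A1, hA1, hpA1, hxA1⟩ := hx
        obtain ⟨A2, hA2, hpA2, hyA2⟩ := hy
        have hA12 : A1 = A2 := cluster_eq_of_mem hC hA1 hA2 hpA1 hpA2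
        exact hxy ⟨A1, hA1, hxA1, by rw [hA12]; exact hyA2⟩
      have h1 : ¬ SameCluster C y x := fun h => hxy (same_symm h)
      have h2 : ¬ SameCluster C y p₀ := fun h => hy (same_symm h)
      calc s x y = s y x := hsym x y
        _ = s y p₀ := hcon y x p₀ h1 h2
        _ = s p₀ y := hsym y p₀
        _ = s p₀ b₀ := hcon p₀ y b₀ hy hpb
    · have h1 : ¬ SameCluster C x p₀ := fun h => hx (same_symm h)
      calc s x y = s x p₀ := hcon x y p₀ hxy h1
        _ = s p₀ x := hsym x p₀
        _ = s p₀ b₀ := hcon p₀ x b₀ hx hpb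
  obtain ⟨p, y, z, hpy, hpz, hne⟩ := key
  obtain ⟨P, hP, hpP⟩ := hC.2.2.2 p
  have hyP : y ∉ P := fun h => hpy ⟨P, hP, hpP, h⟩
  have hzP : z ∉ P := fun h => hpz ⟨P, hP, hpP, h⟩
  have hyPc : y ∈ Pᶜ := Finset.mem_compl.mpr hyP
  obtain ⟨q₀, hq₀, hq₀max⟩ := Finset.exists_max_image Pᶜ (s p) ⟨y, hyPc⟩
  have hlow : ∃ x₀ ∈ (Pᶜ : Finset X), s p x₀ < s p q₀ := by
    by_cases h : s p y < s p q₀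
    · exact ⟨y, hyPc, h⟩
    · have h1 : s p y = s p q₀ := le_antisymm (hq₀max y hyPc) (not_lt.mp h)
      have hzPc : z ∈ Pᶜ := Finset.mem_compl.mpr hzP
      refine ⟨z, hzPc, lt_of_le_of_ne (hq₀max z hzPc) ?_⟩
      intro h2
      exact hne (h1.trans h2.symm)
  obtain ⟨x₀, hx₀Pc, hx₀lt⟩ := hlow
  obtain ⟨Y, hY, hq₀Y⟩ := hC.2.2.2 q₀
  have hq₀P : q₀ ∉ P := Finset.mem_compl.mp hq₀
  have hYP : Y ≠ P := fun h => hq₀P (h ▸ hq₀Y)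
  have hpY : p ∉ Y := fun h => hYP (cluster_eq_of_mem hC hY hP h hpP)
  have hYsub : ∀ x ∈ Y, s p x ≤ s p q₀ := fun x hx =>
    hq₀max x (Finset.mem_compl.mpr
      (fun hxP => Finset.disjoint_left.mp (hC.2.2.1 Y hY P hP hYP) hx hxP))
  by_cases hcase : ∃ u ∈ Y, s p u < s p q₀
  · obtain ⟨u, huY, hu⟩ := hcase
    exact ⟨p, Y, P, q₀, hY, hP, hYP, hq₀Y,
      F_moveA hpP hpY hq₀Y (hbig Y hY) hYsub huY hu⟩
  · push_neg at hcase
    have hYconst : ∀ u ∈ Y, s p u = s p q₀ := fun u hu =>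
      le_antisymm (hYsub u hu) (hcase u hu)
    have hx₀Y : x₀ ∉ Y := fun h => absurd (hYconst x₀ h) (ne_of_lt hx₀lt)
    obtain ⟨D, hD, hx₀D⟩ := hC.2.2.2 x₀
    have hx₀P : x₀ ∉ P := Finset.mem_compl.mp hx₀Pc
    have hDP : D ≠ P := fun h => hx₀P (h ▸ hx₀D)
    have hDY : D ≠ Y := fun h => hx₀Y (h ▸ hx₀D)
    have hpD : p ∉ D := fun h => hDP (cluster_eq_of_mem hC hD hP h hpP)
    by_cases hcase2 : ∃ u ∈ D, ∃ v ∈ D, s p u < s p v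
    · obtain ⟨u, huD, v, hvD, huv⟩ := hcase2
      obtain ⟨d, hdD, hdmax⟩ := Finset.exists_max_image D (s p) ⟨u, huD⟩
      have hlt' : s p u < s p d := lt_of_lt_of_le huv (hdmax v hvD)
      exact ⟨p, D, P, d, hD, hP, hDP, hdD,
        F_moveA hpP hpD hdD (hbig D hD) hdmax huD hlt'⟩
    · push_neg at hcase2
      have hDconst : ∀ v ∈ D, s p v = s p x₀ := fun v hv =>
        le_antisymm (hcase2 x₀ hx₀D v hv) (hcase2 v hv x₀ hx₀D)
      have hTne : Y.Nonempty := ⟨q₀, hq₀Y⟩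
      have hlt : s p x₀ * (Y.card : ℝ) < ∑ x ∈ Y, s p x := by
        have hYsum : ∑ x ∈ Y, s p x = (Y.card : ℝ) * s p q₀ := by
          rw [Finset.sum_congr rfl hYconst, Finset.sum_const, nsmul_eq_mul]
        rw [hYsum]
        have hYpos : (0:ℝ) < Y.card := by exact_mod_cast Finset.card_pos.mpr hTne
        nlinarith [hx₀lt, hYpos]
      exact ⟨p, D, Y, x₀, hD, hY, hDY, hx₀D,
        F_moveB hpD hpY hx₀D hx₀Y (hbig D hD) hTne hDconst hlt⟩

end RcutAux5

/-- if every cluster of the k-clustering `C` has at least two points and `C` is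
not separation-uniform, then for some weight function some k-clustering beats `C` under
ratio-cut, so `C` does not minimize the ratio-cut objective for that weight function. -/
theorem rcut_not_minimizer_of_not_separationUniform
    {X : Type*} [Fintype X] [DecidableEq X]
    (s : X → X → ℝ) (hsym : ∀ x y, s x y = s y x) (hnn : ∀ x y, 0 ≤ s x y)
    (k : ℕ) (hk1 : 1 < k) (hk2 : k < Fintype.card X)
    (C : Finset (Finset X)) (hC : IsClustering C k)
    (hbig : ∀ A ∈ C, 2 ≤ A.card)
    (hnsep : ¬ IsSeparationUniform C s) :
    ∃ w : X → ℝ, IsWeight w ∧ ∃ C' : Finset (Finset X), IsClustering C' k ∧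
      rcut C' w s < rcut C w s := by
  obtain ⟨p, S, T, q, hS, hT, hST, hqS, hFlt⟩ :=
    exists_good_move hC hk1 hk2 hbig hsym hnsep
  have h2S : 2 ≤ S.card := hbig S hS
  set C' := move C S T q with hC'def
  have hC' : IsClustering C' k := by
    have h := move_clustering hC hS hT hST hqS h2S
    rwa [hC.1] at h
  have hsum1 : ∑ A ∈ C, Fav s p A
      = Fav s p S + Fav s p T + ∑ A ∈ (C.erase S).erase T, Fav s p A :=
    sum_orig hC hS hT hST hqS (Fav s p)
  have hsum2 : ∑ A ∈ C', Fav s p A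
      = Fav s p (S.erase q) + Fav s p (insert q T)
        + ∑ A ∈ (C.erase S).erase T, Fav s p A :=
    sum_move hC hS hT hST hqS h2S (Fav s p)
  have hΦ : ∑ A ∈ C', Fav s p A < ∑ A ∈ C, Fav s p A := by
    rw [hsum1, hsum2]
    exact add_lt_add_left hFlt _
  set Φ := ∑ A ∈ C, Fav s p A with hΦdef
  set Φ' := ∑ A ∈ C', Fav s p A with hΦ'def
  set E : ℝ := ∑ x : X, ∑ y : X, s x y with hEdef
  have hEnn : 0 ≤ E := by
    rw [hEdef]
    apply Finset.sum_nonneg; intro x _; exact Finset.sum_nonneg (fun y _ => hnn x y)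
  set δ : ℝ := Φ - Φ' with hδdef
  set M : ℝ := (k : ℝ) * E / δ + 1 with hMdef
  clear_value Φ Φ' E δ M
  have hδpos : 0 < δ := by rw [hδdef]; exact sub_pos.mpr hΦ
  have hM1 : 1 ≤ M := by
    have h0 : 0 ≤ (k : ℝ) * E / δ :=
      div_nonneg (mul_nonneg (Nat.cast_nonneg k) hEnn) hδpos.le
    rw [hMdef]
    linarith
  refine ⟨fun x => if x = p then M else 1, ?_, C', hC', ?_⟩
  · intro x; dsimp only; split
    · linarith
    · norm_num
  · have hu := rcut_upper (s := s) (p := p) hsym hnn hM1 hC'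
    have hl := rcut_lower (s := s) (p := p) hsym hnn hM1 hC
    rw [← hΦ'def, ← hEdef] at hu
    rw [← hΦdef] at hl
    have hcard' : ((C'.card : ℕ) : ℝ) = (k : ℝ) := by exact_mod_cast congrArg Nat.cast hC'.1
    rw [hcard'] at hu
    have hkE : (k : ℝ) * E < M * δ := by
      have hMδ : M * δ = (k : ℝ) * E + δ := by
        rw [hMdef]
        field_simp
      rw [hMδ]; linarith
    have hmid : M / 2 * Φ' + (k : ℝ) / 2 * E < M / 2 * Φ := by
      have hΦeq : Φ = Φ' + δ := by rw [hδdef]; ring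
      rw [hΦeq]
      nlinarith [hkE]
    calc rcut C' (fun x => if x = p then M else 1) s
        ≤ M / 2 * Φ' + (k : ℝ) / 2 * E := hu
      _ < M / 2 * Φ := hmid
      _ ≤ rcut C (fun x => if x = p then M else 1) s := hl
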